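/- Let E be a Banach space and H a closed subspace such that both H and E/H are isomorphic to subspaces of c₀. Then E is isomorphic to a subspace of c₀. (One may use Sobczyk's theorem: every bounded operator from a subspace of a separable Banach space into c₀ extends to the whole space.) -/

import Mathlib

open Filter Topology Bornology

noncomputable section

variable {𝕜 E F : Type*} [RCLike 𝕜] [NormedAddCommGroup E] [NormedSpace 𝕜 E]
  [NormedAddCommGroup F] [NormedSpace 𝕜 F]

/-- `c₀` over `𝕜`: scalar sequences vanishing at infinity, with the sup norm. -/
abbrev czero (𝕜 : Type*) [RCLike 𝕜] := ZeroAtInftyContinuousMap ℕ 𝕜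

/-- A sequence of functionals is weak* null if it converges to `0` pointwise. -/
def WeakStarNull (χ : ℕ → E →L[𝕜] 𝕜) : Prop :=
  ∀ x : E, Tendsto (fun n => χ n x) atTop (𝓝 0)

/-- `sup_{x ∈ B} |χ n x| → 0`. -/
def UnifNull (χ : ℕ → E →L[𝕜] 𝕜) (B : Set E) : Prop :=
  Tendsto (fun n => ⨆ x : B, ‖χ n (x : E)‖) atTop (𝓝 0)

/-- A set is limited if every weak* null sequence converges to `0` uniformly on it. -/
def Limited (𝕜 : Type*) [RCLike 𝕜] {E : Type*} [NormedAddCommGroup E]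
    [NormedSpace 𝕜 E] (B : Set E) : Prop :=
  ∀ χ : ℕ → E →L[𝕜] 𝕜, WeakStarNull χ → UnifNull χ B

/-- A Banach space is Gelfand–Phillips if every (bounded) limited set is totally bounded. -/
def GelfandPhillips (𝕜 E : Type*) [RCLike 𝕜] [NormedAddCommGroup E]
    [NormedSpace 𝕜 E] : Prop :=
  ∀ B : Set E, IsBounded B → Limited 𝕜 B → TotallyBounded B


set_option maxHeartbeats 1000000
set_option synthInstance.maxHeartbeats 400000
open Set TopologicalSpace

def mkCZ (g : ℕ → 𝕜) (hg : Tendsto g atTop (𝓝 0)) : czero 𝕜 :=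
  ⟨⟨g, continuous_of_discreteTopology⟩, by rwa [cocompact_eq_atTop]⟩
@[simp] lemma mkCZ_apply (g : ℕ → 𝕜) (hg) (n : ℕ) : mkCZ g hg n = g n := rfl
lemma czero_apply_norm_le (f : czero 𝕜) (n : ℕ) : ‖f n‖ ≤ ‖f‖ := by
  rw [← ZeroAtInftyContinuousMap.norm_toBCF_eq_norm]
  exact BoundedContinuousFunction.norm_coe_le_norm f.toBCF n
lemma czero_norm_le {f : czero 𝕜} {C : ℝ} (hC : 0 ≤ C) (h : ∀ n, ‖f n‖ ≤ C) : ‖f‖ ≤ C := by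
  rw [← ZeroAtInftyContinuousMap.norm_toBCF_eq_norm]
  exact BoundedContinuousFunction.norm_le hC |>.mpr h
lemma czero_tendsto (f : czero 𝕜) : Tendsto (fun n => f n) atTop (𝓝 0) := by
  have := f.zero_at_infty'
  rwa [cocompact_eq_atTop] at this

/-- extend a finite vector by zero -/
def extCZ (N : ℕ) : (Fin N → 𝕜) →L[𝕜] czero 𝕜 :=
  LinearMap.mkContinuous
    { toFun := fun v => mkCZ (fun n => if h : n < N then v ⟨n, h⟩ else 0)
        (by
          refine tendsto_atTop_of_eventually_const (i₀ := N) fun n hn => ?_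
          simp [Nat.not_lt.mpr hn])
      map_add' := fun v w => by
        ext n; by_cases h : n < N <;> simp [mkCZ, h, ZeroAtInftyContinuousMap.coe_mk]
      map_smul' := fun c v => by
        ext n; by_cases h : n < N <;> simp [mkCZ, h, ZeroAtInftyContinuousMap.coe_mk] }
    1 (fun v => by
      refine czero_norm_le (by positivity) fun n => ?_
      simp only [LinearMap.coe_mk, AddHom.coe_mk, mkCZ_apply]
      split
      · simpa using (norm_le_pi_norm v _).trans (le_refl _)
      · simp [norm_nonneg])

instance czero_separable : SeparableSpace (czero 𝕜) := by
  rw [← isSeparable_univ_iff]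
  have hsub : (univ : Set (czero 𝕜)) ⊆ closure (⋃ N : ℕ, range (extCZ (𝕜 := 𝕜) N)) := by
    intro f _
    rw [Metric.mem_closure_iff]
    intro ε hε
    have := czero_tendsto f
    rw [Metric.tendsto_atTop] at this
    obtain ⟨N, hN⟩ := this (ε/2) (by positivity)
    refine ⟨extCZ N (fun i => f i), mem_iUnion.mpr ⟨N, mem_range_self _⟩, ?_⟩
    rw [dist_eq_norm]
    refine lt_of_le_of_lt (czero_norm_le (C := ε/2) (by positivity) fun n => ?_) (by linarith)
    by_cases h : n < N
    · simp only [ZeroAtInftyContinuousMap.coe_sub, Pi.sub_apply]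
      have h2 : (extCZ (𝕜 := 𝕜) N (fun i => f i)) n = f n := by
        simp [extCZ, mkCZ, LinearMap.mkContinuous_apply, h, ZeroAtInftyContinuousMap.coe_mk]
      rw [h2]; simp; positivity
    · have : ‖f n‖ < ε/2 := by simpa [dist_eq_norm] using hN n (Nat.not_lt.mp h)
      simp only [ZeroAtInftyContinuousMap.coe_sub, Pi.sub_apply]
      have h2 : (extCZ (𝕜 := 𝕜) N (fun i => f i)) n = 0 := by
        simp [extCZ, mkCZ, LinearMap.mkContinuous_apply, h, ZeroAtInftyContinuousMap.coe_mk]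
      rw [h2]
      simpa using this.le
  refine (IsSeparable.iUnion fun N => ?_).closure.mono hsub
  exact (IsSeparable.of_separableSpace (univ : Set (Fin N → 𝕜))).image (extCZ N).continuous |>.mono
    (by rw [image_univ])

def evalCZ (n : ℕ) : czero 𝕜 →L[𝕜] 𝕜 :=
  LinearMap.mkContinuous ⟨⟨fun f => f n, fun f g => rfl⟩, fun c f => rfl⟩ 1
    (fun f => by simpa using czero_apply_norm_le f n)

lemma sobczyk [SeparableSpace E] (H : Submodule 𝕜 E) (T : H →L[𝕜] czero 𝕜) :
    ∃ G : E →L[𝕜] czero 𝕜, ∀ h : H, G (h : E) = T h := by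
  classical
  have : Nonempty E := ⟨0⟩
  obtain ⟨x, hx⟩ := exists_dense_seq E
  set M := ‖T‖ with hM
  have hM0 : 0 ≤ M := norm_nonneg T
  set f : ℕ → H →L[𝕜] 𝕜 := fun n => (evalCZ n).comp T with hfdef
  have hfnorm : ∀ n, ‖f n‖ ≤ M := by
    intro n
    refine (ContinuousLinearMap.opNorm_comp_le _ _).trans ?_
    have h1 : ‖(evalCZ (𝕜 := 𝕜) n)‖ ≤ 1 := LinearMap.mkContinuous_norm_le _ zero_le_one _
    calc ‖evalCZ (𝕜 := 𝕜) n‖ * ‖T‖ ≤ 1 * ‖T‖ := by gcongr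
      _ = M := one_mul _
  choose F hFext hFnorm using fun n => exists_extension_norm_eq H (f n)
  have hFnormM : ∀ n, ‖F n‖ ≤ M := fun n => (hFnorm n).le.trans (hfnorm n)
  have hFH : ∀ h : H, Tendsto (fun n => F n (h : E)) atTop (𝓝 0) := by
    intro h
    have heq : (fun n => F n (h : E)) = fun n => (T h) n := by
      funext n; rw [hFext n h]; rfl
    rw [heq]
    exact czero_tendsto (T h)
  -- the pseudo-metric functional
  set DD : (E →L[𝕜] 𝕜) → ℝ := fun g => ∑' k, (2:ℝ)⁻¹^k * min 1 ‖g (x k)‖ with hDDdef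
  have hterm_nonneg : ∀ (g : E →L[𝕜] 𝕜) (k : ℕ), 0 ≤ (2:ℝ)⁻¹^k * min 1 ‖g (x k)‖ :=
    fun g k => mul_nonneg (by positivity) (le_min zero_le_one (norm_nonneg _))
  have hterm_le : ∀ (g : E →L[𝕜] 𝕜) (k : ℕ), (2:ℝ)⁻¹^k * min 1 ‖g (x k)‖ ≤ (2:ℝ)⁻¹^k := by
    intro g k
    calc (2:ℝ)⁻¹^k * min 1 ‖g (x k)‖ ≤ (2:ℝ)⁻¹^k * 1 :=
          mul_le_mul_of_nonneg_left (min_le_left _ _) (by positivity)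
      _ = (2:ℝ)⁻¹^k := mul_one _
  have hsumgeo : Summable (fun k : ℕ => (2:ℝ)⁻¹^k) :=
    summable_geometric_of_lt_one (by norm_num) (by norm_num)
  have hsum : ∀ g : E →L[𝕜] 𝕜, Summable (fun k => (2:ℝ)⁻¹^k * min 1 ‖g (x k)‖) :=
    fun g => Summable.of_nonneg_of_le (hterm_nonneg g) (hterm_le g) hsumgeo
  have hDD0 : ∀ g, 0 ≤ DD g := fun g => tsum_nonneg (hterm_nonneg g)
  have hDDterm : ∀ (g : E →L[𝕜] 𝕜) (k : ℕ), (2:ℝ)⁻¹^k * min 1 ‖g (x k)‖ ≤ DD g :=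
    fun g k => Summable.le_tsum (hsum g) k (fun j _ => hterm_nonneg g j)
  -- pointwise convergence from DD convergence
  have hptw : ∀ (g : ℕ → E →L[𝕜] 𝕜) (C : ℝ), 0 ≤ C → (∀ n, ‖g n‖ ≤ C) →
      Tendsto (fun n => DD (g n)) atTop (𝓝 0) → ∀ y, Tendsto (fun n => g n y) atTop (𝓝 0) := by
    intro g C hC0 hgC hDDconv y
    rw [NormedAddCommGroup.tendsto_nhds_zero]
    intro ε hε
    obtain ⟨k, hk⟩ := Metric.denseRange_iff.mp hx y (ε / (2 * (C + 1))) (by positivity)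
    set ε' := min 1 (ε/2) with hε'def
    have hε'pos : 0 < ε' := lt_min one_pos (by positivity)
    have hδ : (0:ℝ) < (2:ℝ)⁻¹^k * ε' := by positivity
    filter_upwards [hDDconv.eventually_lt_const hδ] with n hn
    have hterm := (hDDterm (g n) k).trans_lt hn
    have hmin : min 1 ‖g n (x k)‖ < ε' := by
      have h2 : (0:ℝ) < (2:ℝ)⁻¹^k := by positivity
      exact lt_of_mul_lt_mul_left hterm h2.le
    have hxk : ‖g n (x k)‖ < ε' := by
      by_cases h1 : ‖g n (x k)‖ ≤ 1
      · rwa [min_eq_right h1] at hmin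
      · exfalso
        rw [min_eq_left (le_of_not_ge h1)] at hmin
        exact absurd hmin (not_lt.mpr (min_le_left _ _))
    have hsplit : g n y = g n (x k) + g n (y - x k) := by rw [map_sub]; abel
    rw [hsplit]
    have h2 : ‖g n (y - x k)‖ ≤ C * (ε / (2 * (C + 1))) := by
      refine ((g n).le_opNorm _).trans ?_
      have hyk : ‖y - x k‖ ≤ ε / (2 * (C + 1)) := by
        rw [dist_eq_norm] at hk; exact hk.le
      exact mul_le_mul (hgC n) hyk (norm_nonneg _) hC0
    have h3 : C * (ε / (2 * (C + 1))) ≤ ε / 2 := by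
      have h4 : C * (ε / (2 * (C + 1))) ≤ (C + 1) * (ε / (2 * (C + 1))) := by
        have : (0:ℝ) ≤ ε / (2 * (C + 1)) := by positivity
        nlinarith
      have h5 : (C + 1) * (ε / (2 * (C + 1))) = ε / 2 := by
        field_simp
      linarith
    calc ‖g n (x k) + g n (y - x k)‖ ≤ ‖g n (x k)‖ + ‖g n (y - x k)‖ := norm_add_le _ _
      _ < ε' + ε/2 := by exact add_lt_add_of_lt_of_le hxk (h2.trans h3)
      _ ≤ ε/2 + ε/2 := by gcongr; exact min_le_right _ _
      _ = ε := by ring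
  -- the annihilator ball
  set K : Set (E →L[𝕜] 𝕜) := {g | ‖g‖ ≤ M ∧ ∀ y ∈ H, g y = 0} with hKdef
  have hK0 : (0 : E →L[𝕜] 𝕜) ∈ K := ⟨by simpa using hM0, fun y _ => rfl⟩
  haveI : Nonempty K := ⟨⟨0, hK0⟩⟩
  set φ : ℕ → ℝ := fun n => ⨅ h : K, DD (F n - (h : E →L[𝕜] 𝕜)) with hφdef
  have hφ0 : ∀ n, 0 ≤ φ n := fun n => Real.iInf_nonneg fun h => hDD0 _
  have hbdd : ∀ n, BddBelow (Set.range fun h : K => DD (F n - (h : E →L[𝕜] 𝕜))) :=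
    fun n => ⟨0, by rintro - ⟨h, rfl⟩; exact hDD0 _⟩
  have hφle : ∀ (n : ℕ) (h : K), φ n ≤ DD (F n - (h : E →L[𝕜] 𝕜)) :=
    fun n h => ciInf_le (hbdd n) h
  -- weak* continuity of DD-distance to a fixed functional
  have hcont : ∀ g₀ : E →L[𝕜] 𝕜,
      Continuous fun ψ : WeakDual 𝕜 E => ∑' k, (2:ℝ)⁻¹^k * min 1 ‖ψ (x k) - g₀ (x k)‖ := by
    intro g₀
    refine continuous_tsum ?_ hsumgeo ?_
    · intro k
      exact continuous_const.mul (continuous_const.min (((WeakDual.eval_continuous (x k)).sub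
        continuous_const).norm))
    · intro k ψ
      rw [Real.norm_of_nonneg (mul_nonneg (by positivity) (le_min zero_le_one (norm_nonneg _)))]
      calc (2:ℝ)⁻¹^k * min 1 ‖ψ (x k) - g₀ (x k)‖ ≤ (2:ℝ)⁻¹^k * 1 :=
            mul_le_mul_of_nonneg_left (min_le_left _ _) (by positivity)
        _ = (2:ℝ)⁻¹^k := mul_one _
  -- main claim: φ → 0
  have hφconv : Tendsto φ atTop (𝓝 0) := by
    have key : ∀ ε > 0, ∀ᶠ n in atTop, φ n < ε := by
      intro ε hε
      by_contra hcon
      rw [Filter.not_eventually] at hcon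
      simp only [not_lt] at hcon
      haveI hne : (atTop ⊓ 𝓟 {n | ε ≤ φ n}).NeBot := frequently_iff_neBot.mp hcon
      set L₀ := atTop ⊓ 𝓟 {n | ε ≤ φ n} with hL₀def
      set Fw : ℕ → WeakDual 𝕜 E := fun n => StrongDual.toWeakDual (F n) with hFwdef
      set s : Set (WeakDual 𝕜 E) := WeakDual.toStrongDual ⁻¹' Metric.closedBall 0 M with hsdef
      have hmem : ∀ n, Fw n ∈ s := by
        intro n
        simp only [hsdef, Set.mem_preimage, Metric.mem_closedBall, dist_zero_right]
        exact hFnormM n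
      have hcomp : IsCompact s := WeakDual.isCompact_closedBall (𝕜 := 𝕜) (0 : StrongDual 𝕜 E) M
      have hle : Filter.map Fw L₀ ≤ 𝓟 s := by
        rw [Filter.le_principal_iff, Filter.mem_map]
        exact Filter.univ_mem' hmem
      obtain ⟨g, hg_mem, hg_cl⟩ := hcomp.exists_clusterPt hle
      -- g annihilates H
      have hgH : ∀ y ∈ H, g y = 0 := by
        intro y hy
        have h1 : ClusterPt (g y)
            (Filter.map (fun ψ : WeakDual 𝕜 E => ψ y) (Filter.map Fw L₀)) :=
          hg_cl.map (WeakDual.eval_continuous y).continuousAt Filter.tendsto_map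
        rw [Filter.map_map] at h1
        have h2 : Tendsto (fun n => F n y) L₀ (𝓝 0) :=
          (hFH ⟨y, hy⟩).mono_left inf_le_left
        have h3 : (fun n => Fw n y) = fun n => F n y := rfl
        rw [Function.comp_def] at h1
        haveI : (Filter.map (fun n => Fw n y) L₀).NeBot := Filter.NeBot.map inferInstance _
        refine eq_of_nhds_neBot (NeBot.mono h1 ?_)
        refine inf_le_inf_left _ ?_
        rw [show (fun n => Fw n y) = fun n => F n y from rfl]
        exact Filter.le_def.mpr fun U hU => h2 hU
      have hgK : (WeakDual.toStrongDual g : E →L[𝕜] 𝕜) ∈ K := by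
        constructor
        · have := hg_mem
          simp only [hsdef, Set.mem_preimage, Metric.mem_closedBall, dist_zero_right] at this
          exact this
        · exact hgH
      -- open neighbourhood where DD-distance to g is < ε
      set U : Set (WeakDual 𝕜 E) :=
        (fun ψ : WeakDual 𝕜 E => ∑' k, (2:ℝ)⁻¹^k *
          min 1 ‖ψ (x k) - (WeakDual.toStrongDual g : E →L[𝕜] 𝕜) (x k)‖) ⁻¹' Set.Iio ε
        with hUdef
      have hU_nhds : U ∈ 𝓝 g := by
        refine (hcont _).continuousAt.preimage_mem_nhds ?_
        have hval : (∑' k, (2:ℝ)⁻¹^k *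
            min 1 ‖g (x k) - (WeakDual.toStrongDual g : E →L[𝕜] 𝕜) (x k)‖) = 0 := by
          have : ∀ k : ℕ, (2:ℝ)⁻¹^k *
              min 1 ‖g (x k) - (WeakDual.toStrongDual g : E →L[𝕜] 𝕜) (x k)‖ = 0 := by
            intro k
            have : g (x k) - (WeakDual.toStrongDual g : E →L[𝕜] 𝕜) (x k) = 0 := sub_self _
            rw [this]
            simp
          rw [tsum_congr this, tsum_zero]
        show Set.Iio ε ∈ 𝓝 (∑' k, (2:ℝ)⁻¹^k *
          min 1 ‖g (x k) - (WeakDual.toStrongDual g : E →L[𝕜] 𝕜) (x k)‖)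
        rw [hval]
        exact Iio_mem_nhds hε
      -- derive the contradiction
      have hB : {n | ε ≤ φ n} ∈ L₀ := Filter.mem_inf_of_right (Filter.mem_principal_self _)
      have hV : Fw '' {n | ε ≤ φ n} ∈ Filter.map Fw L₀ :=
        Filter.image_mem_map hB
      have hUV : (U ∩ Fw '' {n | ε ≤ φ n}).Nonempty := by
        haveI : (𝓝 g ⊓ Filter.map Fw L₀).NeBot := hg_cl
        exact Filter.nonempty_of_mem (Filter.inter_mem (Filter.mem_inf_of_left hU_nhds)
          (Filter.mem_inf_of_right hV))
      obtain ⟨ψ, hψU, n, hn, rfl⟩ := hUV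
      have hlt : DD (F n - (WeakDual.toStrongDual g : E →L[𝕜] 𝕜)) < ε := by
        have : (∑' k, (2:ℝ)⁻¹^k *
            min 1 ‖Fw n (x k) - (WeakDual.toStrongDual g : E →L[𝕜] 𝕜) (x k)‖) < ε := hψU
        simp only [hDDdef, ContinuousLinearMap.sub_apply]
        exact this
      exact absurd ((hφle n ⟨_, hgK⟩).trans_lt hlt) (not_lt.mpr hn)
    refine tendsto_order.2 ⟨fun a ha => ?_, fun a ha => key a ha⟩
    exact Filter.Eventually.of_forall fun n => lt_of_lt_of_le ha (hφ0 n)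
  -- choose nearly optimal elements of K
  have hchoice : ∀ n : ℕ, ∃ h : K, DD (F n - (h : E →L[𝕜] 𝕜)) < φ n + 1/(n+1) := by
    intro n
    refine exists_lt_of_ciInf_lt ?_
    have : (0:ℝ) < 1/(n+1) := by positivity
    linarith
  choose hKs hKslt using hchoice
  set G : ℕ → E →L[𝕜] 𝕜 := fun n => F n - (hKs n : E →L[𝕜] 𝕜) with hGdef
  have hGnorm : ∀ n, ‖G n‖ ≤ 2 * M := by
    intro n
    calc ‖F n - (hKs n : E →L[𝕜] 𝕜)‖ ≤ ‖F n‖ + ‖(hKs n : E →L[𝕜] 𝕜)‖ := norm_sub_le _ _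
      _ ≤ M + M := add_le_add (hFnormM n) (hKs n).2.1
      _ = 2 * M := by ring
  have hGDD : Tendsto (fun n => DD (G n)) atTop (𝓝 0) := by
    refine squeeze_zero (fun n => hDD0 _) (fun n => (hKslt n).le) ?_
    have h1 : Tendsto (fun n : ℕ => 1/((n:ℝ)+1)) atTop (𝓝 0) :=
      tendsto_one_div_add_atTop_nhds_zero_nat
    simpa using hφconv.add h1
  have hGptw : ∀ y, Tendsto (fun n => G n y) atTop (𝓝 0) :=
    hptw G (2*M) (by linarith) hGnorm hGDD
  have hGext : ∀ (n : ℕ) (h : H), G n (h : E) = f n h := by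
    intro n h
    simp only [hGdef, ContinuousLinearMap.sub_apply]
    rw [(hKs n).2.2 (h : E) h.2, sub_zero, hFext n h]
  -- assemble the extension operator
  refine ⟨LinearMap.mkContinuous
    { toFun := fun y => mkCZ (fun n => G n y) (hGptw y)
      map_add' := fun y z => by
        ext n
        simp [mkCZ, ZeroAtInftyContinuousMap.coe_mk, map_add]
      map_smul' := fun c y => by
        ext n
        simp [mkCZ, ZeroAtInftyContinuousMap.coe_mk, map_smul] }
    (2*M) (fun y => czero_norm_le (mul_nonneg (by linarith) (norm_nonneg y))
      (fun n => ((G n).le_opNorm y).trans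
        (mul_le_mul_of_nonneg_right (hGnorm n) (norm_nonneg y)))), ?_⟩
  intro h
  ext n
  show G n (h : E) = T h n
  rw [hGext n h]
  rfl

lemma sep_of_embed [SeparableSpace F] (T : E →L[𝕜] F) (c : ℝ) (hc : 0 < c)
    (hT : ∀ x, c * ‖x‖ ≤ ‖T x‖) : SeparableSpace E := by
  have : SecondCountableTopology F := UniformSpace.secondCountable_of_separable F
  have hanti : AntilipschitzWith (c⁻¹.toNNReal) T := by
    refine AntilipschitzWith.of_le_mul_dist fun x y => ?_
    have := hT (x - y)
    rw [map_sub] at this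
    rw [dist_eq_norm, dist_eq_norm]
    calc ‖x - y‖ ≤ c⁻¹ * ‖T x - T y‖ := by
          rw [le_inv_mul_iff₀ hc]; exact this
      _ ≤ (c⁻¹.toNNReal : ℝ) * ‖T x - T y‖ := by
          gcongr; exact (Real.coe_toNNReal _ (by positivity)).ge
  have hemb : IsEmbedding T := (hanti.isUniformEmbedding T.uniformContinuous).isEmbedding
  have : SecondCountableTopology E := hemb.secondCountableTopology
  exact inferInstance

lemma sep_E (H : Submodule 𝕜 E) [SeparableSpace H] [SeparableSpace (E ⧸ H)] :
    SeparableSpace E := by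
  have : Nonempty H := ⟨0⟩
  have : Nonempty (E ⧸ H) := ⟨0⟩
  obtain ⟨u, hu⟩ := exists_dense_seq H
  obtain ⟨v, hv⟩ := exists_dense_seq (E ⧸ H)
  choose w hw using fun n => Submodule.Quotient.mk_surjective H (v n)
  refine ⟨⟨range (fun p : ℕ × ℕ => (u p.1 : E) + w p.2), countable_range _, ?_⟩⟩
  rw [Metric.dense_iff]
  intro x r hr
  obtain ⟨j, hj⟩ := Metric.denseRange_iff.mp hv (Submodule.Quotient.mk x) (r/4) (by positivity)
  have hmk : ‖(Submodule.Quotient.mk (x - w j) : E ⧸ H)‖ < r/4 := by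
    rw [Submodule.Quotient.mk_sub, hw]
    rwa [dist_eq_norm] at hj
  obtain ⟨m, hm, hmn⟩ := Submodule.Quotient.norm_mk_lt
    (Submodule.Quotient.mk (x - w j) : E ⧸ H) (show (0:ℝ) < r/4 by positivity)
  have hmem : x - w j - m ∈ H := by
    rw [← Submodule.Quotient.mk_eq_zero, Submodule.Quotient.mk_sub, hm, sub_self]
  obtain ⟨i, hi⟩ := Metric.denseRange_iff.mp hu ⟨x - w j - m, hmem⟩ (r/4) (by positivity)
  refine ⟨(u i : E) + w j, ?_, mem_range_self (i, j)⟩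
  rw [Subtype.dist_eq, dist_eq_norm] at hi
  rw [Metric.mem_ball, dist_comm, dist_eq_norm]
  have : x - ((u i : E) + w j) = (x - w j - m - (u i : E)) + m := by abel
  rw [this]
  calc ‖(x - w j - m - (u i : E)) + m‖ ≤ ‖x - w j - m - (u i : E)‖ + ‖m‖ := norm_add_le _ _
    _ < r/4 + (r/4 + r/4) := add_lt_add hi (hmn.trans_le (by linarith [hmk.le]))
    _ ≤ r := by linarith

lemma interleave_tendsto (a b : czero 𝕜) :
    Tendsto (fun n => if n % 2 = 0 then a (n/2) else b (n/2)) atTop (𝓝 (0:𝕜)) := by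
  rw [NormedAddCommGroup.tendsto_nhds_zero]
  intro ε hε
  obtain ⟨N₁, hN₁⟩ := (Metric.tendsto_atTop.mp (czero_tendsto a)) ε hε
  obtain ⟨N₂, hN₂⟩ := (Metric.tendsto_atTop.mp (czero_tendsto b)) ε hε
  rw [eventually_atTop]
  refine ⟨2 * (N₁ + N₂), fun n hn => ?_⟩
  have hdiv : N₁ + N₂ ≤ n / 2 := by omega
  by_cases h : n % 2 = 0
  · simp only [h, if_true]
    have := hN₁ (n/2) (by omega)
    rwa [dist_zero_right] at this
  · simp only [h, if_false]
    have := hN₂ (n/2) (by omega)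
    rwa [dist_zero_right] at this

def interleaveCZ (A B : E →L[𝕜] czero 𝕜) : E →L[𝕜] czero 𝕜 :=
  LinearMap.mkContinuous
    { toFun := fun y => mkCZ (fun n => if n % 2 = 0 then A y (n/2) else B y (n/2))
        (interleave_tendsto (A y) (B y))
      map_add' := fun y z => by
        ext n
        by_cases h : n % 2 = 0 <;> simp [mkCZ, h, map_add]
      map_smul' := fun c y => by
        ext n
        by_cases h : n % 2 = 0 <;> simp [mkCZ, h, map_smul] }
    (‖A‖ + ‖B‖) (fun y => by
      refine czero_norm_le (by positivity) fun n => ?_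
      simp only [LinearMap.coe_mk, AddHom.coe_mk, mkCZ_apply]
      split
      · calc ‖A y (n/2)‖ ≤ ‖A y‖ := czero_apply_norm_le _ _
          _ ≤ ‖A‖ * ‖y‖ := A.le_opNorm y
          _ ≤ (‖A‖ + ‖B‖) * ‖y‖ := by nlinarith [norm_nonneg B, norm_nonneg y]
      · calc ‖B y (n/2)‖ ≤ ‖B y‖ := czero_apply_norm_le _ _
          _ ≤ ‖B‖ * ‖y‖ := B.le_opNorm y
          _ ≤ (‖A‖ + ‖B‖) * ‖y‖ := by nlinarith [norm_nonneg A, norm_nonneg y])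

lemma interleaveCZ_normA (A B : E →L[𝕜] czero 𝕜) (y : E) :
    ‖A y‖ ≤ ‖interleaveCZ A B y‖ := by
  refine czero_norm_le (norm_nonneg _) fun m => ?_
  have h1 : interleaveCZ A B y (2*m) = A y m := by
    simp only [interleaveCZ, LinearMap.mkContinuous_apply, LinearMap.coe_mk, AddHom.coe_mk,
      mkCZ_apply]
    rw [if_pos (by omega)]
    congr 1
    omega
  rw [← h1]
  exact czero_apply_norm_le _ _

lemma interleaveCZ_normB (A B : E →L[𝕜] czero 𝕜) (y : E) :
    ‖B y‖ ≤ ‖interleaveCZ A B y‖ := by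
  refine czero_norm_le (norm_nonneg _) fun m => ?_
  have h1 : interleaveCZ A B y (2*m+1) = B y m := by
    simp only [interleaveCZ, LinearMap.mkContinuous_apply, LinearMap.coe_mk, AddHom.coe_mk,
      mkCZ_apply]
    rw [if_neg (by omega)]
    congr 1
    omega
  rw [← h1]
  exact czero_apply_norm_le _ _


theorem stmt19 [CompleteSpace E] (H : Submodule 𝕜 E)
    [hH : IsClosed (H : Set E)]
    (h1 : ∃ T : H →L[𝕜] czero 𝕜, ∃ c > (0 : ℝ), ∀ x : H, c * ‖x‖ ≤ ‖T x‖)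
    (h2 : ∃ S : (E ⧸ H) →L[𝕜] czero 𝕜, ∃ c > (0 : ℝ), ∀ y : E ⧸ H, c * ‖y‖ ≤ ‖S y‖) :
    ∃ R : E →L[𝕜] czero 𝕜, ∃ c > (0 : ℝ), ∀ x : E, c * ‖x‖ ≤ ‖R x‖ := by
  obtain ⟨T, c₁, hc₁, hT⟩ := h1
  obtain ⟨S, c₂, hc₂, hS⟩ := h2
  haveI : TopologicalSpace.SeparableSpace H := sep_of_embed T c₁ hc₁ hT
  haveI : TopologicalSpace.SeparableSpace (E ⧸ H) := sep_of_embed S c₂ hc₂ hS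
  haveI : TopologicalSpace.SeparableSpace E := sep_E H
  obtain ⟨G, hG⟩ := sobczyk H T
  set πL : E →L[𝕜] E ⧸ H := LinearMap.mkContinuous H.mkQ 1
    (fun y => by simpa using Submodule.Quotient.norm_mk_le H y) with hπdef
  have hπ : ∀ y : E, πL y = Submodule.Quotient.mk y := fun y => rfl
  set M₂ := ‖G‖ with hM₂
  have hM₂0 : 0 ≤ M₂ := norm_nonneg G
  set δ : ℝ := c₁ / (2 * (c₁ + M₂ + 1)) with hδdef
  have hδpos : 0 < δ := div_pos hc₁ (by nlinarith)
  have hδbound : δ * (c₁ + M₂) ≤ c₁ / 2 := by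
    rw [hδdef, div_mul_eq_mul_div, div_le_div_iff₀ (by nlinarith) two_pos]
    nlinarith
  refine ⟨interleaveCZ G (S.comp πL), min (c₂ * δ) (c₁ / 2),
    lt_min (by positivity) (by positivity), fun x => ?_⟩
  have hRA := interleaveCZ_normA G (S.comp πL) x
  have hRB := interleaveCZ_normB G (S.comp πL) x
  by_cases hcase : δ * ‖x‖ ≤ ‖(Submodule.Quotient.mk x : E ⧸ H)‖
  · have h1 : c₂ * ‖(Submodule.Quotient.mk x : E ⧸ H)‖ ≤ ‖S (πL x)‖ := by
      rw [hπ]; exact hS _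
    have h2 : ‖(S.comp πL) x‖ = ‖S (πL x)‖ := by rw [ContinuousLinearMap.comp_apply]
    calc min (c₂ * δ) (c₁ / 2) * ‖x‖ ≤ c₂ * δ * ‖x‖ :=
          mul_le_mul_of_nonneg_right (min_le_left _ _) (norm_nonneg x)
      _ = c₂ * (δ * ‖x‖) := by ring
      _ ≤ c₂ * ‖(Submodule.Quotient.mk x : E ⧸ H)‖ :=
          mul_le_mul_of_nonneg_left hcase hc₂.le
      _ ≤ ‖S (πL x)‖ := h1
      _ = ‖(S.comp πL) x‖ := h2.symm
      _ ≤ ‖interleaveCZ G (S.comp πL) x‖ := hRB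
  · push_neg at hcase
    have hεpos : (0:ℝ) < δ * ‖x‖ - ‖(Submodule.Quotient.mk x : E ⧸ H)‖ := by linarith
    obtain ⟨m, hm_eq, hm_lt⟩ := Submodule.Quotient.norm_mk_lt
      (Submodule.Quotient.mk x : E ⧸ H) hεpos
    have hm : ‖m‖ < δ * ‖x‖ := by linarith
    have hmem : x - m ∈ H := by
      rw [← Submodule.Quotient.mk_eq_zero, Submodule.Quotient.mk_sub, hm_eq, sub_self]
    have hGeq : G (x - m) = T ⟨x - m, hmem⟩ := hG ⟨x - m, hmem⟩
    have hTh : c₁ * ‖x - m‖ ≤ ‖G (x - m)‖ := by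
      rw [hGeq]
      have hcoe : ‖(⟨x - m, hmem⟩ : H)‖ = ‖x - m‖ := rfl
      have := hT ⟨x - m, hmem⟩
      rwa [hcoe] at this
    have hGm : ‖G m‖ ≤ M₂ * ‖m‖ := G.le_opNorm m
    have htr : ‖G (x - m)‖ ≤ ‖G x‖ + ‖G m‖ := by
      rw [map_sub]; exact norm_sub_le _ _
    have h5 : ‖x‖ - ‖m‖ ≤ ‖x - m‖ := norm_sub_norm_le x m
    have e0 : c₁ * (‖x‖ - ‖m‖) ≤ c₁ * ‖x - m‖ := mul_le_mul_of_nonneg_left h5 hc₁.le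
    have e1 : (c₁ + M₂) * ‖m‖ ≤ (c₁ + M₂) * (δ * ‖x‖) :=
      mul_le_mul_of_nonneg_left hm.le (by linarith)
    have e2 : (c₁ + M₂) * (δ * ‖x‖) ≤ c₁ / 2 * ‖x‖ := by
      nlinarith [norm_nonneg x]
    have key : c₁ / 2 * ‖x‖ ≤ ‖G x‖ := by nlinarith
    calc min (c₂ * δ) (c₁ / 2) * ‖x‖ ≤ c₁ / 2 * ‖x‖ :=
          mul_le_mul_of_nonneg_right (min_le_right _ _) (norm_nonneg x)
      _ ≤ ‖G x‖ := key
      _ ≤ ‖interleaveCZ G (S.comp πL) x‖ := hRA
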